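/- Let (A,B) be a definite pencil with γ(A,B) > ε > 0. Then Λ_{ε/√2}(A,B) ∩ ℝ ⊆ Λ_ε^sym(A,B) ⊆ Λ_ε(A,B) ∩ ℝ, where Λ_ε(A,B) is the unstructured ε-pseudospectrum allowing arbitrary perturbations E, F with ||E||₂, ||F||₂ ≤ ε. -/

import Mathlib

open Matrix MeasureTheory ProbabilityTheory
open scoped Classical

noncomputable def specNorm {m n : Type*} [Fintype m] [Fintype n] [DecidableEq n]
    (A : Matrix m n ℂ) : ℝ :=
  ‖LinearMap.toContinuousLinearMap (Matrix.toEuclideanLin A)‖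

noncomputable def crawford {n : ℕ} (A B : Matrix (Fin n) (Fin n) ℂ) : ℝ :=
  sInf { r | ∃ x : EuclideanSpace ℂ (Fin n), ‖x‖ = 1 ∧
    r = ‖star (x : Fin n → ℂ) ⬝ᵥ (A + Complex.I • B).mulVec x‖ }

noncomputable def pencilNorm {n : ℕ} (A B : Matrix (Fin n) (Fin n) ℂ) : ℝ :=
  specNorm (Matrix.fromCols A B)

def symPseudo {n : ℕ} (ε : ℝ) (A B : Matrix (Fin n) (Fin n) ℂ) : Set ℂ :=
  { z | ∃ E F : Matrix (Fin n) (Fin n) ℂ, E.IsHermitian ∧ F.IsHermitian ∧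
      Real.sqrt (specNorm E ^ 2 + specNorm F ^ 2) ≤ ε ∧
      ∃ u : Fin n → ℂ, u ≠ 0 ∧ (A + E).mulVec u = z • (B + F).mulVec u }

noncomputable def smin {n : ℕ} (M : Matrix (Fin n) (Fin n) ℂ) : ℝ :=
  sInf { r | ∃ x : EuclideanSpace ℂ (Fin n), ‖x‖ = 1 ∧ r = ‖Matrix.toEuclideanLin M x‖ }

def pencilEigs {n : ℕ} (A B : Matrix (Fin n) (Fin n) ℂ) : Set ℝ :=
  { lam | ∃ u : Fin n → ℂ, u ≠ 0 ∧ A.mulVec u = (lam : ℂ) • B.mulVec u }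

def genPseudo {n : ℕ} (ε : ℝ) (A B : Matrix (Fin n) (Fin n) ℂ) : Set ℂ :=
  { z | ∃ E F : Matrix (Fin n) (Fin n) ℂ, specNorm E ≤ ε ∧ specNorm F ≤ ε ∧
      ∃ u : Fin n → ℂ, u ≠ 0 ∧ (A + E).mulVec u = z • (B + F).mulVec u }

noncomputable def toE {n : ℕ} (v : Fin n → ℂ) : EuclideanSpace ℂ (Fin n) :=
  (WithLp.equiv 2 (Fin n → ℂ)).symm v

lemma toE_inner {n : ℕ} (v w : Fin n → ℂ) : (inner ℂ (toE v) (toE w) : ℂ) = star v ⬝ᵥ w := by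
  rw [dotProduct_comm]; rfl

lemma toE_add {n : ℕ} (v w : Fin n → ℂ) : toE (v + w) = toE v + toE w := rfl
lemma toE_smul {n : ℕ} (a : ℂ) (v : Fin n → ℂ) : toE (a • v) = a • toE v := rfl

lemma toE_lin {n : ℕ} (M : Matrix (Fin n) (Fin n) ℂ) (v : Fin n → ℂ) :
    Matrix.toEuclideanLin M (toE v) = toE (M.mulVec v) :=
  rfl

lemma specNorm_nonneg {n : ℕ} (M : Matrix (Fin n) (Fin n) ℂ) : 0 ≤ specNorm M :=
  norm_nonneg _

lemma mulVec_norm_le {n : ℕ} (M : Matrix (Fin n) (Fin n) ℂ) (v : Fin n → ℂ) :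
    ‖toE (M.mulVec v)‖ ≤ specNorm M * ‖toE v‖ := by
  rw [← toE_lin]
  exact (LinearMap.toContinuousLinearMap (Matrix.toEuclideanLin M)).le_opNorm (toE v)

lemma specNorm_le {n : ℕ} (M : Matrix (Fin n) (Fin n) ℂ) (c : ℝ) (hc : 0 ≤ c)
    (h : ∀ v : Fin n → ℂ, ‖toE (M.mulVec v)‖ ≤ c * ‖toE v‖) : specNorm M ≤ c := by
  apply ContinuousLinearMap.opNorm_le_bound _ hc
  intro x
  have := h ((WithLp.equiv 2 (Fin n → ℂ)) x)
  exact this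

lemma quad_abs_le {n : ℕ} (M : Matrix (Fin n) (Fin n) ℂ) (x : Fin n → ℂ)
    (hx : ‖toE x‖ = 1) : ‖star x ⬝ᵥ M.mulVec x‖ ≤ specNorm M := by
  rw [← toE_inner]
  
  calc ‖inner ℂ (toE x) (toE (M.mulVec x))‖ ≤ ‖toE x‖ * ‖toE (M.mulVec x)‖ := by
        simpa using norm_inner_le_norm (𝕜 := ℂ) (toE x) (toE (M.mulVec x))
    _ ≤ 1 * (specNorm M * 1) := by
        rw [hx, ← hx]
        exact mul_le_mul_of_nonneg_left (by simpa [hx] using mulVec_norm_le M x) (by positivity)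
    _ = specNorm M := by ring

lemma herm_quad_im {n : ℕ} {M : Matrix (Fin n) (Fin n) ℂ} (hM : M.IsHermitian)
    (x : Fin n → ℂ) : (star x ⬝ᵥ M.mulVec x).im = 0 := by
  have hs := (Matrix.isHermitian_iff_isSymmetric.mp hM) (toE x) (toE x)
  rw [toE_lin, toE_inner, toE_inner] at hs
  have : (starRingEnd ℂ) (star x ⬝ᵥ M.mulVec x) = star x ⬝ᵥ M.mulVec x := by
    calc (starRingEnd ℂ) (star x ⬝ᵥ M.mulVec x) = star (M.mulVec x) ⬝ᵥ x := by
          simp [dotProduct, map_sum, mul_comm]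
      _ = _ := hs
  exact Complex.conj_eq_iff_im.mp this

lemma toE_sub {n : ℕ} (v w : Fin n → ℂ) : toE (v - w) = toE v - toE w := rfl

lemma toE_eq_zero {n : ℕ} {v : Fin n → ℂ} : toE v = 0 ↔ v = 0 :=
  ⟨fun h => (WithLp.equiv 2 (Fin n → ℂ)).symm.injective h, fun h => by simp [h, toE]⟩

lemma dot_conj {n : ℕ} (v w : Fin n → ℂ) :
    star v ⬝ᵥ w = (starRingEnd ℂ) (star w ⬝ᵥ v) := by
  simp [dotProduct, map_sum, mul_comm]

lemma vmv_conjTranspose {n : ℕ} (a b : Fin n → ℂ) :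
    (vecMulVec a (star b))ᴴ = vecMulVec b (star a) := by
  ext i j
  simp [vecMulVec, conjTranspose_apply, mul_comm]

lemma vmv_mulVec {n : ℕ} (a b v : Fin n → ℂ) :
    (vecMulVec a b).mulVec v = (b ⬝ᵥ v) • a := by
  ext i
  simp only [mulVec, dotProduct, vecMulVec_apply, Pi.smul_apply, smul_eq_mul, Finset.sum_mul]
  apply Finset.sum_congr rfl
  intro j _
  ring

lemma norm_combo {E : Type*} [NormedAddCommGroup E] [InnerProductSpace ℂ E]
    (x y : E) (h : (inner ℂ x y : ℂ) = 0) (a b : ℂ) :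
    ‖a • x + b • y‖ ^ 2 = ‖a‖ ^ 2 * ‖x‖ ^ 2 + ‖b‖ ^ 2 * ‖y‖ ^ 2 := by
  rw [norm_add_sq (𝕜 := ℂ)]
  rw [inner_smul_left, inner_smul_right, h]
  simp [norm_smul, mul_pow]

set_option maxHeartbeats 2000000 in
lemma exists_hermitian_mulVec {n : ℕ} (u r : Fin n → ℂ) (hu : ‖toE u‖ = 1)
    (hr : (star u ⬝ᵥ r).im = 0) :
    ∃ H : Matrix (Fin n) (Fin n) ℂ, H.IsHermitian ∧ H.mulVec u = r ∧
      specNorm H ≤ ‖toE r‖ := by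
  have huu : star u ⬝ᵥ u = 1 := by
    have := toE_inner u u
    rw [inner_self_eq_norm_sq_to_K (𝕜 := ℂ), hu] at this
    simpa using this.symm
  set α : ℝ := (star u ⬝ᵥ r).re with hαdef
  have hα : star u ⬝ᵥ r = (α : ℂ) := Complex.ext rfl (by simpa using hr)
  set s : Fin n → ℂ := r - (α : ℂ) • u with hsdef
  have hrs : r = (α : ℂ) • u + s := by simp [hsdef]
  have hus : star u ⬝ᵥ s = 0 := by
    simp [hsdef, dotProduct_sub, dotProduct_smul, hα, huu]
  have hsu : star s ⬝ᵥ u = 0 := by rw [dot_conj, hus]; simp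
  have hru : star r ⬝ᵥ u = (α : ℂ) := by
    rw [dot_conj, hα]; simp
  set c : ℝ := ‖toE s‖ with hcdef
  set β : ℝ := α / c ^ 2 with hβdef
  refine ⟨vecMulVec r (star u) + vecMulVec u (star r) - (α : ℂ) • vecMulVec u (star u)
      - (β : ℂ) • vecMulVec s (star s), ?_, ?_, ?_⟩
  · unfold Matrix.IsHermitian
    simp only [conjTranspose_sub, conjTranspose_add, conjTranspose_smul, vmv_conjTranspose,
      Complex.star_def, Complex.conj_ofReal]
    abel
  · simp only [Matrix.sub_mulVec, Matrix.add_mulVec, Matrix.smul_mulVec, vmv_mulVec,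
      huu, hru, hsu]
    simp
  · -- norm bound
    have horthE : (inner ℂ (toE u) (toE s) : ℂ) = 0 := by rw [toE_inner]; exact hus
    have hr2 : ‖toE r‖ ^ 2 = α ^ 2 + c ^ 2 := by
      rw [hrs, toE_add, toE_smul, ← one_smul ℂ (toE s)]
      rw [norm_combo _ _ horthE]
      simp [hu, hcdef]
    apply specNorm_le _ _ (norm_nonneg _)
    intro v
    set p : ℂ := star u ⬝ᵥ v with hpdef
    set q : ℂ := star s ⬝ᵥ v with hqdef
    have hrv : star r ⬝ᵥ v = (α : ℂ) * p + q := by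
      rw [hrs]; simp [add_dotProduct, smul_dotProduct, star_add, star_smul,
        Complex.star_def, Complex.conj_ofReal, hpdef, hqdef]
    have hHv : (vecMulVec r (star u) + vecMulVec u (star r) - (α : ℂ) • vecMulVec u (star u)
        - (β : ℂ) • vecMulVec s (star s)).mulVec v
        = ((α : ℂ) * p + q) • u + (p - (β : ℂ) * q) • s := by
      simp only [Matrix.sub_mulVec, Matrix.add_mulVec, Matrix.smul_mulVec, vmv_mulVec,
        ← hpdef, ← hqdef, hrv]
      rw [hrs]
      module
    have zsq : ∀ z : ℂ, ‖z‖ ^ 2 = z.re ^ 2 + z.im ^ 2 := fun z => by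
      rw [Complex.sq_norm, Complex.normSq_apply]; ring
    have hpv : ‖p‖ ≤ ‖toE v‖ := by
      have := norm_inner_le_norm (𝕜 := ℂ) (toE u) (toE v)
      rw [toE_inner, hu, one_mul] at this
      exact this
    have key : ‖((α:ℂ) * p + q) • toE u + (p - (β:ℂ) * q) • toE s‖ ^ 2
        ≤ (‖toE r‖ * ‖toE v‖) ^ 2 := by
      rw [norm_combo _ _ horthE, hu]
      rcases eq_or_ne c 0 with hc | hc
      · have hs0 : s = 0 := toE_eq_zero.mp (norm_eq_zero.mp (hcdef ▸ hc))
        have hq0 : q = 0 := by simp [hqdef, hs0]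
        have hsn : ‖toE s‖ = (0:ℝ) := by rw [← hcdef, hc]
        have hsq : (‖toE r‖ * ‖toE v‖)^2 = (α^2 + c^2) * ‖toE v‖^2 := by
          rw [mul_pow, hr2]
        rw [hq0, hsn, hsq, hc]
        have hnap : ‖(α:ℂ) * p + 0‖ = |α| * ‖p‖ := by
          simp [norm_mul, Complex.norm_real, Real.norm_eq_abs]
        rw [hnap]
        nlinarith [sq_abs α, sq_nonneg α, mul_self_le_mul_self (norm_nonneg p) hpv,
          norm_nonneg (toE v), abs_nonneg α, norm_nonneg p]
      · set γ : ℂ := q / (c:ℂ)^2 with hγdef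
        have hsn : ‖toE s‖ = c := rfl
        have huu' : (inner ℂ (toE u) (toE u) : ℂ) = 1 := by rw [toE_inner]; exact huu
        have hss : (inner ℂ (toE s) (toE s) : ℂ) = (c:ℂ)^2 := by
          rw [inner_self_eq_norm_sq_to_K]
          norm_cast
        have hsu' : (inner ℂ (toE s) (toE u) : ℂ) = 0 := by rw [toE_inner]; exact hsu
        have huv : (inner ℂ (toE u) (toE v) : ℂ) = p := toE_inner u v
        have hsv : (inner ℂ (toE s) (toE v) : ℂ) = q := toE_inner s v
        set w : EuclideanSpace ℂ (Fin n) := toE v - p • toE u - γ • toE s with hwdef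
        have hcC : ((c:ℂ))^2 ≠ 0 := pow_ne_zero 2 (Complex.ofReal_ne_zero.mpr hc)
        have huw : (inner ℂ (toE u) w : ℂ) = 0 := by
          rw [hwdef, inner_sub_right, inner_sub_right, inner_smul_right, inner_smul_right,
            huu', huv, horthE]
          ring
        have hsw : (inner ℂ (toE s) w : ℂ) = 0 := by
          rw [hwdef, inner_sub_right, inner_sub_right, inner_smul_right, inner_smul_right,
            hsv, hsu', hss, hγdef]
          field_simp
          rw [mul_div_assoc, div_self (Complex.ofReal_ne_zero.mpr hc)]; ring
        have hdecomp : toE v = (p • toE u + γ • toE s) + w := by rw [hwdef]; abel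
        have hcombow : (inner ℂ (p • toE u + γ • toE s) w : ℂ) = 0 := by
          rw [inner_add_left, inner_smul_left, inner_smul_left, huw, hsw]; ring
        have hnv : ‖toE v‖^2 = ‖p • toE u + γ • toE s‖^2 + ‖w‖^2 := by
          rw [hdecomp, norm_add_sq (𝕜 := ℂ), hcombow]; simp
        have hγn : ‖γ‖^2 = ‖q‖^2 / (c^2)^2 := by
          rw [hγdef, norm_div, div_pow, norm_pow]
          simp [Complex.norm_real, Real.norm_eq_abs, sq_abs]
        have hc2 : (0:ℝ) < c^2 := by positivity
        have hPQ : ‖p‖^2 + ‖q‖^2 / c^2 ≤ ‖toE v‖^2 := by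
          rw [hnv, norm_combo _ _ horthE, hu, hsn, hγn]
          have heq2 : ‖q‖^2/(c^2)^2 * c^2 = ‖q‖^2/c^2 := by field_simp
          nlinarith [norm_nonneg w]
        have hexp : ‖(α:ℂ)*p+q‖^2 * 1^2 + ‖p - (β:ℂ)*q‖^2 * c^2
            = (α^2 + c^2) * (‖p‖^2 + ‖q‖^2/c^2) := by
          rw [zsq ((α:ℂ)*p+q), zsq (p-(β:ℂ)*q), zsq p, zsq q, hβdef]
          simp only [Complex.add_re, Complex.add_im, Complex.sub_re, Complex.sub_im,
            Complex.mul_re, Complex.mul_im, Complex.ofReal_re, Complex.ofReal_im]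
          field_simp
          ring
        rw [hsn, hexp]
        calc (α^2+c^2) * (‖p‖^2 + ‖q‖^2/c^2) ≤ (α^2+c^2) * ‖toE v‖^2 :=
              mul_le_mul_of_nonneg_left hPQ (by positivity)
          _ = (‖toE r‖ * ‖toE v‖)^2 := by rw [mul_pow, hr2]
    rw [hHv]
    calc ‖toE ((((α:ℂ) * p + q) • u + (p - (β:ℂ) * q) • s))‖
        = Real.sqrt (‖((α:ℂ) * p + q) • toE u + (p - (β:ℂ) * q) • toE s‖ ^ 2) := by
          rw [toE_add, toE_smul, toE_smul, Real.sqrt_sq (norm_nonneg _)]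
      _ ≤ Real.sqrt ((‖toE r‖ * ‖toE v‖) ^ 2) := Real.sqrt_le_sqrt key
      _ = ‖toE r‖ * ‖toE v‖ := Real.sqrt_sq (by positivity)

lemma crawford_le {n : ℕ} (A B : Matrix (Fin n) (Fin n) ℂ) (x : Fin n → ℂ)
    (hx : ‖toE x‖ = 1) :
    crawford A B ≤ ‖star x ⬝ᵥ (A + Complex.I • B).mulVec x‖ := by
  apply csInf_le
  · refine ⟨0, ?_⟩
    rintro r ⟨y, hy, rfl⟩
    exact norm_nonneg _
  · exact ⟨toE x, hx, rfl⟩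

lemma normalize_vec {n : ℕ} (u : Fin n → ℂ) (hu : u ≠ 0) :
    ∃ u' : Fin n → ℂ, ‖toE u'‖ = 1 ∧ ∃ k : ℂ, u' = k • u := by
  have h0 : ‖toE u‖ ≠ 0 := fun h => hu (toE_eq_zero.mp (norm_eq_zero.mp h))
  refine ⟨((‖toE u‖ : ℝ)⁻¹ : ℂ) • u, ?_, _, rfl⟩
  rw [toE_smul, norm_smul]
  simp [Complex.norm_real, Real.norm_eq_abs, abs_of_nonneg (inv_nonneg.mpr (norm_nonneg _))]
  field_simp

lemma unit_ne_zero {n : ℕ} {u : Fin n → ℂ} (hu : ‖toE u‖ = 1) : u ≠ 0 := by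
  intro h
  rw [h, toE_eq_zero.mpr rfl, norm_zero] at hu
  exact one_ne_zero hu.symm

lemma im_zero_aux {n : ℕ} {A B E F : Matrix (Fin n) (Fin n) ℂ}
    (hA : A.IsHermitian) (hB : B.IsHermitian) (hE : E.IsHermitian) (hF : F.IsHermitian)
    {ε : ℝ} (hεγ : ε < crawford A B)
    (hnorm : Real.sqrt (specNorm E ^ 2 + specNorm F ^ 2) ≤ ε)
    {z : ℂ} {u : Fin n → ℂ} (hu : u ≠ 0)
    (heq : (A + E).mulVec u = z • (B + F).mulVec u) : z.im = 0 := by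
  obtain ⟨u', hu', k, hku⟩ := normalize_vec u hu
  have heq' : (A + E).mulVec u' = z • (B + F).mulVec u' := by
    rw [hku, mulVec_smul, mulVec_smul, heq, smul_comm]
  set a := star u' ⬝ᵥ (A + E).mulVec u' with hadef
  set b := star u' ⬝ᵥ (B + F).mulVec u' with hbdef
  have ha : a.im = 0 := herm_quad_im (hA.add hE) u'
  have hb : b.im = 0 := herm_quad_im (hB.add hF) u'
  have hab : a = z * b := by
    rw [hadef, hbdef, heq', dotProduct_smul, smul_eq_mul]
  by_cases hb0 : b = 0
  · exfalso
    have ha0 : a = 0 := by rw [hab, hb0, mul_zero]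
    set aA := star u' ⬝ᵥ A.mulVec u' with haA
    set aE := star u' ⬝ᵥ E.mulVec u' with haE
    set bB := star u' ⬝ᵥ B.mulVec u' with hbB
    set bF := star u' ⬝ᵥ F.mulVec u' with hbF
    have himA : aA.im = 0 := herm_quad_im hA u'
    have himE : aE.im = 0 := herm_quad_im hE u'
    have himB : bB.im = 0 := herm_quad_im hB u'
    have himF : bF.im = 0 := herm_quad_im hF u'
    have hsplitA : aA + aE = 0 := by
      rw [haA, haE, ← dotProduct_add, ← add_mulVec, ← hadef, ha0]
    have hsplitB : bB + bF = 0 := by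
      rw [hbB, hbF, ← dotProduct_add, ← add_mulVec, ← hbdef, hb0]
    have hd : star u' ⬝ᵥ (A + Complex.I • B).mulVec u' = aA + Complex.I * bB := by
      rw [add_mulVec, smul_mulVec, dotProduct_add, dotProduct_smul, smul_eq_mul]
    have hcr := crawford_le A B u' hu'
    rw [hd] at hcr
    have h1 : aA = -aE := eq_neg_of_add_eq_zero_left hsplitA
    have h2 : bB = -bF := eq_neg_of_add_eq_zero_left hsplitB
    have heabs : ‖aE‖ ≤ specNorm E := quad_abs_le E u' hu'
    have hfabs : ‖bF‖ ≤ specNorm F := quad_abs_le F u' hu'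
    have hre : |aA.re| ≤ specNorm E := by
      rw [h1, Complex.neg_re, abs_neg]
      exact (Complex.abs_re_le_norm aE).trans heabs
    have him : |bB.re| ≤ specNorm F := by
      rw [h2, Complex.neg_re, abs_neg]
      exact (Complex.abs_re_le_norm bF).trans hfabs
    have habs : ‖aA + Complex.I * bB‖
        ≤ Real.sqrt (specNorm E ^ 2 + specNorm F ^ 2) := by
      rw [Complex.norm_def, Complex.normSq_apply]
      have hr1 : (aA + Complex.I * bB).re = aA.re := by
        simp [Complex.add_re, Complex.mul_re, himB]
      have hi1 : (aA + Complex.I * bB).im = bB.re := by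
        simp [Complex.add_im, Complex.mul_im, himA]
      rw [hr1, hi1]
      apply Real.sqrt_le_sqrt
      nlinarith [abs_nonneg aA.re, abs_nonneg bB.re, sq_abs aA.re, sq_abs bB.re,
        specNorm_nonneg E, specNorm_nonneg F]
    linarith
  · have hbre : b.re ≠ 0 := fun h => hb0 (Complex.ext h hb)
    have himeq : a.im = z.re * b.im + z.im * b.re := by rw [hab, Complex.mul_im]
    rw [ha, hb] at himeq
    have : z.im * b.re = 0 := by linarith
    rcases mul_eq_zero.mp this with h | h
    · exact h
    · exact absurd h hbre

set_option maxHeartbeats 2000000 in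
theorem symPseudo_between_genPseudo {n : ℕ} (A B : Matrix (Fin n) (Fin n) ℂ)
    (hA : A.IsHermitian) (hB : B.IsHermitian)
    (ε : ℝ) (hε : 0 < ε) (hεγ : ε < crawford A B) :
    { z : ℂ | z ∈ genPseudo (ε / Real.sqrt 2) A B ∧ z.im = 0 } ⊆ symPseudo ε A B ∧
    symPseudo ε A B ⊆ { z : ℂ | z ∈ genPseudo ε A B ∧ z.im = 0 } := by
  constructor
  · rintro z ⟨⟨E, F, hEn, hFn, u, hu0, heq⟩, him⟩
    set t : ℝ := z.re with htdef
    have hz : z = (t : ℂ) := Complex.ext rfl (by simpa using him)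
    obtain ⟨u', hu', k, hku⟩ := normalize_vec u hu0
    have hu'0 : u' ≠ 0 := unit_ne_zero hu'
    have heq' : (A + E).mulVec u' = z • (B + F).mulVec u' := by
      rw [hku, mulVec_smul, mulVec_smul, heq, smul_comm]
    set r₀ : Fin n → ℂ := z • B.mulVec u' - A.mulVec u' with hr₀def
    have hr₀eq : r₀ = E.mulVec u' - z • F.mulVec u' := by
      have h := heq'
      rw [add_mulVec, add_mulVec, smul_add] at h
      rw [hr₀def, sub_eq_sub_iff_add_eq_add, ← h]
      abel
    have hN : ‖toE r₀‖ ≤ ε / Real.sqrt 2 * (1 + |t|) := by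
      have hzn : ‖z‖ = |t| := by rw [hz, Complex.norm_real, Real.norm_eq_abs]
      have hEb : ‖toE (E.mulVec u')‖ ≤ ε / Real.sqrt 2 := by
        have h := mulVec_norm_le E u'
        rw [hu', mul_one] at h
        exact h.trans hEn
      have hFb : ‖toE (F.mulVec u')‖ ≤ ε / Real.sqrt 2 := by
        have h := mulVec_norm_le F u'
        rw [hu', mul_one] at h
        exact h.trans hFn
      calc ‖toE r₀‖ = ‖toE (E.mulVec u') - z • toE (F.mulVec u')‖ := by
            rw [hr₀eq, toE_sub, toE_smul]
        _ ≤ ‖toE (E.mulVec u')‖ + ‖z • toE (F.mulVec u')‖ := norm_sub_le _ _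
        _ ≤ ε / Real.sqrt 2 + |t| * (ε / Real.sqrt 2) := by
            rw [norm_smul, hzn]
            exact add_le_add hEb (mul_le_mul_of_nonneg_left hFb (abs_nonneg t))
        _ = ε / Real.sqrt 2 * (1 + |t|) := by ring
    have hre : (star u' ⬝ᵥ r₀).im = 0 := by
      rw [hr₀def, dotProduct_sub, dotProduct_smul, smul_eq_mul, hz]
      have h1 := herm_quad_im hB u'
      have h2 := herm_quad_im hA u'
      simp [Complex.sub_im, Complex.mul_im, h1, h2]
    set c1 : ℝ := 1 / (1 + t ^ 2) with hc1
    set c2 : ℝ := -t / (1 + t ^ 2) with hc2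
    have h1p : (0:ℝ) < 1 + t ^ 2 := by positivity
    have he_im : (star u' ⬝ᵥ ((c1 : ℂ) • r₀)).im = 0 := by
      rw [dotProduct_smul, smul_eq_mul]
      simp [Complex.mul_im, hre]
    have hf_im : (star u' ⬝ᵥ ((c2 : ℂ) • r₀)).im = 0 := by
      rw [dotProduct_smul, smul_eq_mul]
      simp [Complex.mul_im, hre]
    obtain ⟨E', hE', hE'u, hE'n⟩ := exists_hermitian_mulVec u' ((c1:ℂ) • r₀) hu' he_im
    obtain ⟨F', hF', hF'u, hF'n⟩ := exists_hermitian_mulVec u' ((c2:ℂ) • r₀) hu' hf_im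
    refine ⟨E', F', hE', hF', ?_, u', hu'0, ?_⟩
    · have hne : ‖toE ((c1:ℂ) • r₀)‖ = |c1| * ‖toE r₀‖ := by
        rw [toE_smul, norm_smul, Complex.norm_real, Real.norm_eq_abs]
      have hnf : ‖toE ((c2:ℂ) • r₀)‖ = |c2| * ‖toE r₀‖ := by
        rw [toE_smul, norm_smul, Complex.norm_real, Real.norm_eq_abs]
      have key : specNorm E' ^ 2 + specNorm F' ^ 2 ≤ ε ^ 2 := by
        have hsE := pow_le_pow_left₀ (specNorm_nonneg E') (hE'n.trans_eq hne) 2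
        have hsF := pow_le_pow_left₀ (specNorm_nonneg F') (hF'n.trans_eq hnf) 2
        have hc12 : (c1 ^ 2 + c2 ^ 2) * (1 + t ^ 2) = 1 := by
          rw [hc1, hc2]
          field_simp
        have hD2 : (ε / Real.sqrt 2) ^ 2 = ε ^ 2 / 2 := by
          rw [div_pow, Real.sq_sqrt (by norm_num : (2:ℝ) ≥ 0)]
        have hN2 : ‖toE r₀‖ ^ 2 ≤ ε ^ 2 / 2 * (1 + |t|) ^ 2 := by
          have h := pow_le_pow_left₀ (norm_nonneg (toE r₀)) hN 2
          rwa [mul_pow, hD2] at h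
        have ht2 : (1 + |t|) ^ 2 ≤ 2 * (1 + t ^ 2) := by
          nlinarith [sq_nonneg (1 - |t|), sq_abs t]
        have hN3 : ‖toE r₀‖ ^ 2 ≤ ε ^ 2 * (1 + t ^ 2) := by
          have h := mul_le_mul_of_nonneg_left ht2 (by positivity : (0:ℝ) ≤ ε ^ 2 / 2)
          calc ‖toE r₀‖ ^ 2 ≤ ε ^ 2 / 2 * (1 + |t|) ^ 2 := hN2
            _ ≤ ε ^ 2 / 2 * (2 * (1 + t ^ 2)) := h
            _ = ε ^ 2 * (1 + t ^ 2) := by ring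
        have habs1 : (|c1| * ‖toE r₀‖) ^ 2 = c1 ^ 2 * ‖toE r₀‖ ^ 2 := by
          rw [mul_pow, sq_abs]
        have habs2 : (|c2| * ‖toE r₀‖) ^ 2 = c2 ^ 2 * ‖toE r₀‖ ^ 2 := by
          rw [mul_pow, sq_abs]
        rw [habs1] at hsE
        rw [habs2] at hsF
        have h4 : (c1 ^ 2 * ‖toE r₀‖ ^ 2 + c2 ^ 2 * ‖toE r₀‖ ^ 2) * (1 + t ^ 2)
            ≤ ε ^ 2 * (1 + t ^ 2) := by
          calc (c1 ^ 2 * ‖toE r₀‖ ^ 2 + c2 ^ 2 * ‖toE r₀‖ ^ 2) * (1 + t ^ 2)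
              = ((c1 ^ 2 + c2 ^ 2) * (1 + t ^ 2)) * ‖toE r₀‖ ^ 2 := by ring
            _ = ‖toE r₀‖ ^ 2 := by rw [hc12, one_mul]
            _ ≤ ε ^ 2 * (1 + t ^ 2) := hN3
        have h5 := le_of_mul_le_mul_right h4 h1p
        linarith [hsE, hsF, h5]
      calc Real.sqrt (specNorm E' ^ 2 + specNorm F' ^ 2) ≤ Real.sqrt (ε ^ 2) :=
            Real.sqrt_le_sqrt key
        _ = ε := Real.sqrt_sq hε.le
    · rw [add_mulVec, add_mulVec, hE'u, hF'u, smul_add]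
      have hid : (c1 : ℂ) - (t : ℂ) * (c2 : ℂ) = 1 := by
        rw [hc1, hc2]
        have h0 : ((1 + t ^ 2 : ℝ) : ℂ) ≠ 0 := Complex.ofReal_ne_zero.mpr (ne_of_gt h1p)
        push_cast at h0 ⊢
        field_simp
        ring
      have hsc : (c1:ℂ) • r₀ - z • ((c2:ℂ) • r₀) = r₀ := by
        rw [hz, smul_smul, ← sub_smul, hid, one_smul]
      have hgoal2 : (c1:ℂ) • r₀ - z • ((c2:ℂ) • r₀) = z • B.mulVec u' - A.mulVec u' :=
        hsc.trans hr₀def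
      rw [sub_eq_sub_iff_add_eq_add] at hgoal2
      rw [add_comm (A.mulVec u')]
      exact hgoal2
  · rintro z ⟨E, F, hE, hF, hnorm, u, hu0, heq⟩
    have hsE : specNorm E ≤ ε := by
      rw [(Real.sqrt_sq (specNorm_nonneg E)).symm]
      exact (Real.sqrt_le_sqrt (by nlinarith [sq_nonneg (specNorm F)])).trans hnorm
    have hsF : specNorm F ≤ ε := by
      rw [(Real.sqrt_sq (specNorm_nonneg F)).symm]
      exact (Real.sqrt_le_sqrt (by nlinarith [sq_nonneg (specNorm E)])).trans hnorm
    exact ⟨⟨E, F, hsE, hsF, u, hu0, heq⟩, im_zero_aux hA hB hE hF hεγ hnorm hu0 heq⟩
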